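/- Let q ≥ 2 and d ≥ 2 be integers and let l_1 = 0, l_2, …, l_{d−1} ∈ ℤ_q with l_i − l_j a unit whenever i ≠ j, and let Γ_d(q) = R_d(ℤ_q) ⋊ ℤ^{d−1}. Let 𝒦 be the group of matrices β = (b_{i,j}) ∈ GL_{d−1}(ℤ) such that for all 1 ≤ i ≠ j ≤ d−1 the identity (l_j − l_i) + ∏_{k=1}^{d−1}(t+l_k)^{b_{k,i}} − ∏_{k=1}^{d−1}(t+l_k)^{b_{k,j}} = 0 holds in R_d(ℤ_q), and the same identities hold for the entries of β^{−1}. Each β ∈ 𝒦 induces a ring automorphism σ_β of R_d(ℤ_q) determined by ∏_i(t+l_i)^{v_i} ↦ ∏_i(t+l_i)^{(βv)_i} for v ∈ ℤ^{d−1}, and σ_β preserves the unit group U(R_d(ℤ_q)). Then Aut(Γ_d(q)) is isomorphic to Der(ℤ^{d−1}, R_d(ℤ_q)) ⋊ (U(R_d(ℤ_q)) ⋊ 𝒦), where Der(ℤ^{d−1}, R_d(ℤ_q)) is the abelian group of maps δ : ℤ^{d−1} → R_d(ℤ_q) satisfying δ(v + w) = δ(v) + (∏_i(t+l_i)^{v_i})·δ(w);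 the element β ∈ 𝒦 acts on U(R_d(ℤ_q)) by σ_β, and (R_0, β) ∈ U(R_d(ℤ_q)) ⋊ 𝒦 acts on δ by v ↦ R_0 · σ_β(δ(β^{−1}(v))). -/

import Mathlib

open Polynomial

/-- The multiplicative set of `ℤ_q[t]` generated by the polynomials `t + l i`. -/
noncomputable def dlSub (q d : ℕ) (l : Fin (d-1) → ZMod q) : Submonoid (Polynomial (ZMod q)) :=
  Submonoid.closure {p | ∃ i : Fin (d-1), p = X + C (l i)}

/-- The ring `R_d(ℤ_q) = ℤ_q[t, (t+l_1)⁻¹, …, (t+l_{d-1})⁻¹]`, realized as the localization of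
`ℤ_q[t]` at the multiplicative set generated by the `t + l i`. -/
abbrev Rd (q d : ℕ) (l : Fin (d-1) → ZMod q) := Localization (dlSub q d l)

/-- The image of `t + l i` in `R_d(ℤ_q)`, as a unit. -/
noncomputable def tU (q d : ℕ) (l : Fin (d-1) → ZMod q) (i : Fin (d-1)) : (Rd q d l)ˣ :=
  (IsLocalization.map_units (M := dlSub q d l) (Rd q d l)
    ⟨X + C (l i), Submonoid.subset_closure ⟨i, rfl⟩⟩).unit

/-- The monomial `∏ i (t + l i) ^ (v i)`, as a unit of `R_d(ℤ_q)`. -/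
noncomputable def monU (q d : ℕ) (l : Fin (d-1) → ZMod q) (v : Fin (d-1) → ℤ) : (Rd q d l)ˣ :=
  ∏ i, tU q d l i ^ (v i)

/-- Monomials as a homomorphism from `ℤ^(d-1)` to the units of `R_d(ℤ_q)`. -/
noncomputable def monHom (q d : ℕ) (l : Fin (d-1) → ZMod q) :
    Multiplicative (Fin (d-1) → ℤ) →* (Rd q d l)ˣ where
  toFun v := monU q d l (Multiplicative.toAdd v)
  map_one' := by simp [monU]
  map_mul' v w := by
    simp only [monU, toAdd_mul, Pi.add_apply, zpow_add, Finset.prod_mul_distrib]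

/-- Conversion of additive automorphisms to multiplicative automorphisms of the
corresponding multiplicative group. -/
def addAutToMulAut (R : Type*) [AddCommGroup R] :
    Multiplicative (AddAut R) →* MulAut (Multiplicative R) where
  toFun e := AddEquiv.toMultiplicative (Multiplicative.toAdd e)
  map_one' := rfl
  map_mul' _ _ := rfl

/-- The action of `ℤ^(d-1)` on (the additive group of) `R_d(ℤ_q)`, where `v` acts by
multiplication by the unit `∏ i (t + l i) ^ (v i)`. -/
noncomputable def dlAct (q d : ℕ) (l : Fin (d-1) → ZMod q) :
    Multiplicative (Fin (d-1) → ℤ) →* MulAut (Multiplicative (Rd q d l)) :=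
  (addAutToMulAut (Rd q d l)).comp
    ((DistribMulAction.toAddAut (Rd q d l)ˣ (Rd q d l)).comp (monHom q d l))

/-- The Diestel–Leader group `Γ_d(q) = R_d(ℤ_q) ⋊ ℤ^(d-1)`. -/
abbrev DLGroup (q d : ℕ) (l : Fin (d-1) → ZMod q) :=
  Multiplicative (Rd q d l) ⋊[dlAct q d l] Multiplicative (Fin (d-1) → ℤ)

/-- The group of derivations: maps `δ : B → A` satisfying `δ(b₁b₂) = δ(b₁) · (δ(b₂))^(b₁)`,
where the action of `B` on the abelian group `A` is given by `φ`.  (Written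
multiplicatively; it is a subgroup of the group of all maps `B → A` under pointwise
multiplication.) -/
def derivSubgroup {A : Type*} [CommGroup A] {B : Type*} [Group B] (φ : B →* MulAut A) :
    Subgroup (B → A) where
  carrier := {δ | ∀ b₁ b₂ : B, δ (b₁ * b₂) = δ b₁ * φ b₁ (δ b₂)}
  one_mem' := by intro b₁ b₂; simp
  mul_mem' := by
    intro δ δ' h h' b₁ b₂
    simp only [Pi.mul_apply, h b₁ b₂, h' b₁ b₂, map_mul]
    exact mul_mul_mul_comm _ _ _ _
  inv_mem' := by
    intro δ h b₁ b₂
    simp only [Pi.inv_apply, h b₁ b₂, map_inv, mul_inv]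

/-- The condition on a `(d-1) × (d-1)` integer matrix `β = (b k i)` that, for all `i ≠ j`,
`(l j - l i) + ∏ k (t + l k)^(b k i) - ∏ k (t + l k)^(b k j) = 0` holds in `R_d(ℤ_q)`. -/
def kCond (q d : ℕ) (l : Fin (d-1) → ZMod q) (β : Matrix (Fin (d-1)) (Fin (d-1)) ℤ) : Prop :=
  ∀ i j : Fin (d-1), i ≠ j →
    algebraMap (Polynomial (ZMod q)) (Rd q d l) (C (l j - l i))
      + (monU q d l (fun k => β k i) : Rd q d l)
      - (monU q d l (fun k => β k j) : Rd q d l) = 0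

/-- The set `𝒦` of invertible integer matrices `β` such that the defining identities hold
both for the entries of `β` and for the entries of `β⁻¹`. -/
def kSet (q d : ℕ) (l : Fin (d-1) → ZMod q) : Set (Matrix.GeneralLinearGroup (Fin (d-1)) ℤ) :=
  {β | kCond q d l ↑β ∧ kCond q d l ↑(β⁻¹)}
namespace DLP

open SemidirectProduct Multiplicative

variable {q d : ℕ} {l : Fin (d-1) → ZMod q}

noncomputable def am (q d : ℕ) (l : Fin (d-1) → ZMod q) : Polynomial (ZMod q) →+* Rd q d l :=
  algebraMap _ _

noncomputable def cM (q d : ℕ) (l : Fin (d-1) → ZMod q) : ZMod q →+* Rd q d l :=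
  (am q d l).comp (C : ZMod q →+* Polynomial (ZMod q))

lemma tU_coe (i : Fin (d-1)) :
    ((tU q d l i : (Rd q d l)ˣ) : Rd q d l) = am q d l (X + C (l i)) :=
  IsUnit.unit_spec _

lemma monU_eq (v : Fin (d-1) → ℤ) : monU q d l v = monHom q d l (ofAdd v) := rfl

lemma monU_add (v w : Fin (d-1) → ℤ) :
    monU q d l (v + w) = monU q d l v * monU q d l w :=
  map_mul (monHom q d l) (ofAdd v) (ofAdd w)

lemma monU_zero : monU q d l 0 = 1 := map_one (monHom q d l)

lemma monU_smul (n : ℤ) (v : Fin (d-1) → ℤ) :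
    monU q d l (n • v) = monU q d l v ^ n :=
  map_zpow (monHom q d l) (ofAdd v) n

lemma monU_finsum {ι : Type*} (s : Finset ι) (f : ι → (Fin (d-1) → ℤ)) :
    monU q d l (∑ i ∈ s, f i) = ∏ i ∈ s, monU q d l (f i) := by
  classical
  induction s using Finset.induction_on with
  | empty => simpa using monU_zero
  | insert _ _ h ih => rw [Finset.sum_insert h, Finset.prod_insert h, monU_add, ih]

lemma monU_single (i : Fin (d-1)) : monU q d l (Pi.single i 1) = tU q d l i := by
  unfold monU
  rw [Fintype.prod_eq_single i (fun j hj => by simp [Pi.single_eq_of_ne hj])]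
  simp

lemma q_smul (a : Rd q d l) : q • a = 0 := by
  have h1 : ((q : ℕ) : Rd q d l) = 0 := by
    have : ((q : ℕ) : Polynomial (ZMod q)) = 0 := by
      have : ((q : ℕ) : ZMod q) = 0 := ZMod.natCast_self q
      rw [← map_natCast (C : ZMod q →+* Polynomial (ZMod q)) q, this, map_zero]
    rw [← map_natCast (am q d l) q, this, map_zero]
  rw [nsmul_eq_mul, h1, zero_mul]

lemma addHom_cM_mul [NeZero q] (f : Rd q d l →+ Rd q d l) (c : ZMod q) (a : Rd q d l) :
    f (cM q d l c * a) = cM q d l c * f a := by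
  have hc : ((c.val : ℕ) : ZMod q) = c := ZMod.natCast_rightInverse c
  have h1 : cM q d l c = ((c.val : ℕ) : Rd q d l) := by
    have h2 := map_natCast (cM q d l) c.val
    rwa [hc] at h2
  rw [h1, ← nsmul_eq_mul, map_nsmul, nsmul_eq_mul]

noncomputable def Tel (q d : ℕ) (l : Fin (d-1) → ZMod q) (i0 : Fin (d-1))
    (β : Matrix (Fin (d-1)) (Fin (d-1)) ℤ) : Rd q d l :=
  ↑(monU q d l (fun k => β k i0))

noncomputable def fR (q d : ℕ) (l : Fin (d-1) → ZMod q) (i0 : Fin (d-1))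
    (β : Matrix (Fin (d-1)) (Fin (d-1)) ℤ) : Polynomial (ZMod q) →+* Rd q d l :=
  eval₂RingHom (cM q d l) (Tel q d l i0 β)

variable {i0 : Fin (d-1)} {β γ : Matrix (Fin (d-1)) (Fin (d-1)) ℤ}

lemma fR_C (c : ZMod q) : fR q d l i0 β (C c) = cM q d l c := eval₂_C _ _

lemma fR_X : fR q d l i0 β X = Tel q d l i0 β := eval₂_X _ _

lemma cM_eq_am (c : ZMod q) : cM q d l c = am q d l (C c) := rfl

lemma am_def : algebraMap (Polynomial (ZMod q)) (Rd q d l) = am q d l := rfl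

lemma fR_X_add_C (hl0 : l i0 = 0) (hβ : kCond q d l β) (i : Fin (d-1)) :
    fR q d l i0 β (X + C (l i)) = ↑(monU q d l (fun k => β k i)) := by
  rw [map_add, fR_X, fR_C]
  rcases eq_or_ne i i0 with rfl | hne
  · rw [hl0, map_zero, add_zero]; rfl
  · have h := hβ i0 i (Ne.symm hne)
    rw [hl0, sub_zero] at h
    have h2 : algebraMap (Polynomial (ZMod q)) (Rd q d l) (C (l i)) = cM q d l (l i) := rfl
    rw [h2] at h
    unfold Tel
    linear_combination h

lemma fR_units (hl0 : l i0 = 0) (hβ : kCond q d l β) (s : dlSub q d l) :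
    IsUnit (fR q d l i0 β ↑s) := by
  obtain ⟨s, hs⟩ := s
  induction hs using Submonoid.closure_induction with
  | mem p hp =>
    obtain ⟨i, rfl⟩ := hp
    rw [fR_X_add_C hl0 hβ]
    exact Units.isUnit _
  | one => rw [map_one]; exact isUnit_one
  | mul a b _ _ ha hb => rw [map_mul]; exact ha.mul hb

noncomputable def gR (i0 : Fin (d-1)) (hl0 : l i0 = 0) (hβ : kCond q d l β) :
    Rd q d l →+* Rd q d l :=
  IsLocalization.lift (M := dlSub q d l) (S := Rd q d l) (fR_units hl0 hβ)

lemma gR_am (hl0 : l i0 = 0) (hβ : kCond q d l β) (p : Polynomial (ZMod q)) :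
    gR i0 hl0 hβ (am q d l p) = fR q d l i0 β p :=
  IsLocalization.lift_eq _ _

lemma locExt {F G : Rd q d l →+* Rd q d l} (h : F (am q d l X) = G (am q d l X)) : F = G := by
  apply IsLocalization.ringHom_ext (dlSub q d l)
  apply Polynomial.ringHom_ext'
  · exact RingHom.ext_zmod _ _
  · simpa [am_def] using h

lemma amX (hl0 : l i0 = 0) : am q d l X = ↑(monU q d l (Pi.single i0 1)) := by
  rw [monU_single, tU_coe, hl0, map_zero, add_zero]

lemma gR_monU (hl0 : l i0 = 0) (hβ : kCond q d l β) (v : Fin (d-1) → ℤ) :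
    gR i0 hl0 hβ ↑(monU q d l v) = ↑(monU q d l (β.mulVec v)) := by
  have ht : ∀ i, Units.map (gR i0 hl0 hβ : Rd q d l →* Rd q d l) (tU q d l i)
      = monU q d l (fun k => β k i) := by
    intro i
    apply Units.ext
    rw [Units.coe_map]
    show gR i0 hl0 hβ ↑(tU q d l i) = _
    rw [tU_coe, gR_am hl0 hβ, fR_X_add_C hl0 hβ]
  have h1 : Units.map (gR i0 hl0 hβ : Rd q d l →* Rd q d l) (monU q d l v)
      = monU q d l (β.mulVec v) := by
    unfold monU
    rw [map_prod]
    have h2 : ∀ i ∈ Finset.univ, Units.map (gR i0 hl0 hβ : Rd q d l →* Rd q d l)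
        (tU q d l i ^ v i) = monU q d l (v i • fun k => β k i) := by
      intro i _
      rw [map_zpow, ht i, monU_smul]
    rw [Finset.prod_congr rfl h2, ← monU_finsum]
    congr 1
    funext k
    simp [Matrix.mulVec, dotProduct, Finset.sum_apply, mul_comm]
  calc gR i0 hl0 hβ ↑(monU q d l v)
      = ↑(Units.map (gR i0 hl0 hβ : Rd q d l →* Rd q d l) (monU q d l v)) := rfl
    _ = ↑(monU q d l (β.mulVec v)) := by rw [h1]

lemma col_mul (i : Fin (d-1)) :
    (fun k => (β * γ) k i) = β.mulVec (fun k => γ k i) := by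
  funext k
  simp [Matrix.mulVec, dotProduct, Matrix.mul_apply]

lemma kCond_mul (i0 : Fin (d-1)) (hl0 : l i0 = 0) (hβ : kCond q d l β) (hγ : kCond q d l γ) :
    kCond q d l (β * γ) := by
  intro i j hij
  have h := congrArg (gR i0 hl0 hβ) (hγ i j hij)
  rw [am_def] at h
  rw [map_zero, map_sub, map_add] at h
  rw [← cM_eq_am, ← RingHom.comp_apply, RingHom.ext_zmod ((gR i0 hl0 hβ).comp (cM q d l)) (cM q d l)] at h
  rw [gR_monU hl0 hβ, gR_monU hl0 hβ] at h
  have h2 : algebraMap (Polynomial (ZMod q)) (Rd q d l) (C (l j - l i)) = cM q d l (l j - l i) := rfl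
  rw [h2, col_mul, col_mul]
  exact h

lemma kCond_one : kCond q d l 1 := by
  intro i j hij
  have hcol : ∀ i : Fin (d-1), (fun k => (1 : Matrix (Fin (d-1)) (Fin (d-1)) ℤ) k i)
      = Pi.single i (1:ℤ) := by
    intro i; funext k; rw [Matrix.one_apply, Pi.single_apply]
  rw [am_def] at *
  rw [hcol, hcol, monU_single, monU_single, tU_coe, tU_coe]
  rw [← map_add, ← map_sub]
  have : C (l j - l i) + (X + C (l i)) - (X + C (l j)) = 0 := by
    rw [map_sub]; ring
  rw [this, map_zero]
def Ksub (q d : ℕ) (l : Fin (d-1) → ZMod q) (i0 : Fin (d-1)) (hl0 : l i0 = 0) :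
    Subgroup (Matrix.GeneralLinearGroup (Fin (d-1)) ℤ) where
  carrier := kSet q d l
  one_mem' := by
    refine ⟨?_, ?_⟩
    · rw [Units.val_one]; exact kCond_one
    · rw [inv_one, Units.val_one]; exact kCond_one
  mul_mem' := by
    intro a b ha hb
    refine ⟨?_, ?_⟩
    · rw [Units.val_mul]; exact kCond_mul i0 hl0 ha.1 hb.1
    · rw [mul_inv_rev, Units.val_mul]; exact kCond_mul i0 hl0 hb.2 ha.2
  inv_mem' := by
    intro a ha
    exact ⟨ha.2, by rw [inv_inv]; exact ha.1⟩

variable (hl0 : l i0 = 0)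

/-- matrix of an element of `Ksub` -/
def MK (β : Ksub q d l i0 hl0) : Matrix (Fin (d-1)) (Fin (d-1)) ℤ :=
  ((β : Matrix.GeneralLinearGroup (Fin (d-1)) ℤ) : Matrix (Fin (d-1)) (Fin (d-1)) ℤ)

lemma kc1 (β : Ksub q d l i0 hl0) : kCond q d l (MK hl0 β) := β.2.1

lemma kc2 (β : Ksub q d l i0 hl0) : kCond q d l (MK hl0 β⁻¹) := β.2.2

lemma MK_mul (β γ : Ksub q d l i0 hl0) : MK hl0 (β * γ) = MK hl0 β * MK hl0 γ := rfl

lemma MK_one : MK hl0 (1 : Ksub q d l i0 hl0) = 1 := rfl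

lemma MK_cancel (β : Ksub q d l i0 hl0) (v : Fin (d-1) → ℤ) :
    (MK hl0 β).mulVec ((MK hl0 β⁻¹).mulVec v) = v := by
  rw [Matrix.mulVec_mulVec, ← MK_mul, mul_inv_cancel, MK_one, Matrix.one_mulVec]

lemma MK_cancel' (β : Ksub q d l i0 hl0) (v : Fin (d-1) → ℤ) :
    (MK hl0 β⁻¹).mulVec ((MK hl0 β).mulVec v) = v := by
  rw [Matrix.mulVec_mulVec, ← MK_mul, inv_mul_cancel, MK_one, Matrix.one_mulVec]

noncomputable def sigmaAux (β : Ksub q d l i0 hl0) : RingAut (Rd q d l) := by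
  refine RingEquiv.ofRingHom (gR i0 hl0 (kc1 hl0 β)) (gR i0 hl0 (kc2 hl0 β)) ?_ ?_
  swap
  · apply locExt
    rw [RingHom.comp_apply, RingHom.id_apply, amX hl0]
    erw [gR_monU hl0 (kc1 hl0 β), gR_monU hl0 (kc2 hl0 β), MK_cancel' hl0 β]
  · apply locExt
    rw [RingHom.comp_apply, RingHom.id_apply, amX hl0]
    erw [gR_monU hl0 (kc2 hl0 β), gR_monU hl0 (kc1 hl0 β), MK_cancel hl0 β]

lemma sigmaAux_apply (β : Ksub q d l i0 hl0) (x : Rd q d l) :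
    sigmaAux hl0 β x = gR i0 hl0 (kc1 hl0 β) x := rfl

lemma sigmaAux_monU (β : Ksub q d l i0 hl0) (v : Fin (d-1) → ℤ) :
    sigmaAux hl0 β ↑(monU q d l v) = ↑(monU q d l ((MK hl0 β).mulVec v)) := by
  rw [sigmaAux_apply]; exact gR_monU hl0 (kc1 hl0 β) v

lemma ringAut_ext {e f : RingAut (Rd q d l)} (h : e (am q d l X) = f (am q d l X)) : e = f := by
  have h2 : (e : Rd q d l →+* Rd q d l) = (f : Rd q d l →+* Rd q d l) := locExt h
  exact RingEquiv.ext fun x => DFunLike.congr_fun h2 x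

noncomputable def sigmaH : Ksub q d l i0 hl0 →* RingAut (Rd q d l) where
  toFun := sigmaAux hl0
  map_one' := by
    apply ringAut_ext
    rw [amX hl0]
    show sigmaAux hl0 1 _ = (1 : RingAut (Rd q d l)) _
    rw [sigmaAux_monU hl0 1, MK_one, Matrix.one_mulVec]
    rfl
  map_mul' := by
    intro β γ
    apply ringAut_ext
    show sigmaAux hl0 (β * γ) _ = sigmaAux hl0 β (sigmaAux hl0 γ _)
    rw [amX hl0, sigmaAux_monU, sigmaAux_monU, sigmaAux_monU, MK_mul, Matrix.mulVec_mulVec]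

lemma sigmaH_monU (β : Ksub q d l i0 hl0) (v : Fin (d-1) → ℤ) :
    sigmaH hl0 β ↑(monU q d l v) = ↑(monU q d l ((MK hl0 β).mulVec v)) :=
  sigmaAux_monU hl0 β v

lemma sigmaH_inv_apply (β : Ksub q d l i0 hl0) (x : Rd q d l) :
    sigmaH hl0 β⁻¹ (sigmaH hl0 β x) = x := by
  have h1 : sigmaH hl0 β⁻¹ (sigmaH hl0 β x) = (sigmaH hl0 β⁻¹ * sigmaH hl0 β) x := rfl
  rw [h1, ← map_mul, inv_mul_cancel, map_one]
  rfl

noncomputable def psiH : Ksub q d l i0 hl0 →* MulAut (Rd q d l)ˣ where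
  toFun β := Units.mapEquiv (sigmaH hl0 β).toMulEquiv
  map_one' := by
    ext u
    show sigmaH hl0 1 ↑u = _
    rw [map_one]
    rfl
  map_mul' := by
    intro β γ
    ext u
    show sigmaH hl0 (β * γ) ↑u = _
    rw [map_mul]
    rfl

lemma psiH_coe (β : Ksub q d l i0 hl0) (u : (Rd q d l)ˣ) :
    ((psiH hl0 β u : (Rd q d l)ˣ) : Rd q d l) = sigmaH hl0 β ↑u := rfl
lemma dlAct_apply (v : Multiplicative (Fin (d-1) → ℤ)) (x : Multiplicative (Rd q d l)) :
    dlAct q d l v x = ofAdd (↑(monU q d l (toAdd v)) * toAdd x) := rfl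

/-- the action of `(R₀, β)` on maps `δ` -/
noncomputable def dact (R₀ : (Rd q d l)ˣ) (β : Ksub q d l i0 hl0)
    (δ : Multiplicative (Fin (d-1) → ℤ) → Multiplicative (Rd q d l)) :
    Multiplicative (Fin (d-1) → ℤ) → Multiplicative (Rd q d l) :=
  fun w => ofAdd ((R₀ : Rd q d l) *
    sigmaH hl0 β (toAdd (δ (ofAdd ((MK hl0 β⁻¹).mulVec (toAdd w))))))

lemma dact_mem (R₀ : (Rd q d l)ˣ) (β : Ksub q d l i0 hl0)
    {δ : Multiplicative (Fin (d-1) → ℤ) → Multiplicative (Rd q d l)}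
    (hδ : δ ∈ derivSubgroup (dlAct q d l)) :
    dact hl0 R₀ β δ ∈ derivSubgroup (dlAct q d l) := by
  intro w₁ w₂
  unfold dact
  have h1 : toAdd (w₁ * w₂) = toAdd w₁ + toAdd w₂ := rfl
  rw [h1, Matrix.mulVec_add, ofAdd_add,
    hδ (ofAdd ((MK hl0 β⁻¹).mulVec (toAdd w₁))) (ofAdd ((MK hl0 β⁻¹).mulVec (toAdd w₂)))]
  simp only [dlAct_apply, toAdd_mul, toAdd_ofAdd, ← ofAdd_add]
  apply congrArg ofAdd
  rw [map_add, map_mul]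
  erw [sigmaH_monU hl0 β ((MK hl0 β⁻¹).mulVec (toAdd w₁))]
  rw [MK_cancel hl0 β]
  ring
lemma dact_one (δ : Multiplicative (Fin (d-1) → ℤ) → Multiplicative (Rd q d l)) :
    dact hl0 1 1 δ = δ := by
  funext w
  unfold dact
  rw [show ((1 : Ksub q d l i0 hl0)⁻¹) = 1 from inv_one, MK_one, Matrix.one_mulVec,
    map_one (sigmaH hl0)]
  show ofAdd ((1 : Rd q d l) * toAdd (δ (ofAdd (toAdd w)))) = δ w
  rw [one_mul]
  rfl

lemma dact_comp (R₀ R₁ : (Rd q d l)ˣ) (β γ : Ksub q d l i0 hl0)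
    (δ : Multiplicative (Fin (d-1) → ℤ) → Multiplicative (Rd q d l)) :
    dact hl0 R₀ β (dact hl0 R₁ γ δ) = dact hl0 (R₀ * (psiH hl0 β R₁)) (β * γ) δ := by
  funext w
  unfold dact
  simp only [toAdd_ofAdd]
  apply congrArg ofAdd
  rw [map_mul (sigmaH hl0 β), Matrix.mulVec_mulVec]
  have hMM : MK hl0 γ⁻¹ * MK hl0 β⁻¹ = MK hl0 ((β * γ)⁻¹) := by
    rw [mul_inv_rev, MK_mul]
  rw [hMM]
  have hc : ((R₀ * (psiH hl0 β R₁) : (Rd q d l)ˣ) : Rd q d l)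
      = (R₀ : Rd q d l) * sigmaH hl0 β (R₁ : Rd q d l) := by
    rw [Units.val_mul, psiH_coe]
  rw [hc]
  have hs : sigmaH hl0 β (sigmaH hl0 γ (toAdd (δ (ofAdd ((MK hl0 ((β * γ)⁻¹)).mulVec (toAdd w))))))
      = sigmaH hl0 (β * γ) (toAdd (δ (ofAdd ((MK hl0 ((β * γ)⁻¹)).mulVec (toAdd w))))) := by
    rw [map_mul (sigmaH hl0)]
    rfl
  rw [hs]
  ring

lemma dact_mul (R₀ : (Rd q d l)ˣ) (β : Ksub q d l i0 hl0)
    (δ δ' : Multiplicative (Fin (d-1) → ℤ) → Multiplicative (Rd q d l)) :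
    dact hl0 R₀ β (δ * δ') = dact hl0 R₀ β δ * dact hl0 R₀ β δ' := by
  funext w
  unfold dact
  show ofAdd (↑R₀ * sigmaH hl0 β (toAdd (δ _ * δ' _))) = ofAdd (_ + _)
  rw [toAdd_mul, map_add, mul_add]
  simp only [toAdd_ofAdd]

noncomputable def rhoFun (g : (Rd q d l)ˣ ⋊[psiH hl0] Ksub q d l i0 hl0)
    (δ : derivSubgroup (dlAct q d l)) : derivSubgroup (dlAct q d l) :=
  ⟨dact hl0 g.left g.right ↑δ, dact_mem hl0 g.left g.right δ.2⟩

lemma rhoFun_one (δ : derivSubgroup (dlAct q d l)) : rhoFun hl0 1 δ = δ :=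
  Subtype.ext (dact_one hl0 ↑δ)

lemma rhoFun_comp (g h : (Rd q d l)ˣ ⋊[psiH hl0] Ksub q d l i0 hl0)
    (δ : derivSubgroup (dlAct q d l)) :
    rhoFun hl0 (g * h) δ = rhoFun hl0 g (rhoFun hl0 h δ) := by
  apply Subtype.ext
  show dact hl0 (g * h).left (g * h).right ↑δ = dact hl0 g.left g.right (dact hl0 h.left h.right ↑δ)
  rw [dact_comp]
  rfl

noncomputable def rhoH : ((Rd q d l)ˣ ⋊[psiH hl0] Ksub q d l i0 hl0) →*
    MulAut (derivSubgroup (dlAct q d l)) where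
  toFun g :=
    { toFun := rhoFun hl0 g
      invFun := rhoFun hl0 g⁻¹
      left_inv := fun δ => by rw [← rhoFun_comp, inv_mul_cancel, rhoFun_one]
      right_inv := fun δ => by rw [← rhoFun_comp, mul_inv_cancel, rhoFun_one]
      map_mul' := fun δ ε => Subtype.ext (dact_mul hl0 g.left g.right ↑δ ↑ε) }
  map_one' := MulEquiv.ext fun δ => rhoFun_one hl0 δ
  map_mul' g h := MulEquiv.ext fun δ => rhoFun_comp hl0 g h δ
/-- The big semidirect product group. -/
noncomputable abbrev DG (q d : ℕ) (l : Fin (d-1) → ZMod q) (i0 : Fin (d-1)) (hl0 : l i0 = 0) :=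
  (derivSubgroup (dlAct q d l)) ⋊[rhoH hl0] ((Rd q d l)ˣ ⋊[psiH hl0] Ksub q d l i0 hl0)

noncomputable def act (g : DG q d l i0 hl0) (x : DLGroup q d l) : DLGroup q d l :=
  ⟨ofAdd ((g.right.left : Rd q d l) * sigmaH hl0 g.right.right (toAdd x.left)
      + toAdd ((g.left : Multiplicative (Fin (d-1) → ℤ) → Multiplicative (Rd q d l))
        (ofAdd ((MK hl0 g.right.right).mulVec (toAdd x.right))))),
   ofAdd ((MK hl0 g.right.right).mulVec (toAdd x.right))⟩

lemma act_right (g : DG q d l i0 hl0) (x : DLGroup q d l) :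
    (act hl0 g x).right = ofAdd ((MK hl0 g.right.right).mulVec (toAdd x.right)) := rfl

lemma act_left (g : DG q d l i0 hl0) (x : DLGroup q d l) :
    (act hl0 g x).left = ofAdd ((g.right.left : Rd q d l) * sigmaH hl0 g.right.right (toAdd x.left)
      + toAdd ((g.left : Multiplicative (Fin (d-1) → ℤ) → Multiplicative (Rd q d l))
        (ofAdd ((MK hl0 g.right.right).mulVec (toAdd x.right))))) := rfl

lemma act_one (x : DLGroup q d l) : act hl0 (1 : DG q d l i0 hl0) x = x := by
  apply SemidirectProduct.ext
  · rw [act_left]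
    show ofAdd ((1:Rd q d l) * sigmaH hl0 1 (toAdd x.left) +
      toAdd ((1 : Multiplicative (Fin (d-1) → ℤ) → Multiplicative (Rd q d l))
        (ofAdd ((MK hl0 1).mulVec (toAdd x.right))))) = x.left
    rw [map_one (sigmaH hl0)]
    show ofAdd (1 * toAdd x.left + toAdd (1 : Multiplicative (Rd q d l))) = x.left
    rw [one_mul]
    show ofAdd (toAdd x.left + 0) = x.left
    rw [add_zero, ofAdd_toAdd]
  · rw [act_right]
    show ofAdd ((MK hl0 1).mulVec (toAdd x.right)) = x.right
    rw [MK_one, Matrix.one_mulVec, ofAdd_toAdd]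

lemma act_hom (g : DG q d l i0 hl0) (x y : DLGroup q d l) :
    act hl0 g (x * y) = act hl0 g x * act hl0 g y := by
  apply SemidirectProduct.ext
  · rw [act_left, SemidirectProduct.mul_left, SemidirectProduct.mul_left, act_left, act_left,
      act_right, dlAct_apply, dlAct_apply]
    simp only [SemidirectProduct.mul_right, toAdd_mul, toAdd_ofAdd]
    apply congrArg ofAdd
    rw [Matrix.mulVec_add, ofAdd_add,
      g.left.2 (ofAdd ((MK hl0 g.right.right).mulVec (toAdd x.right)))
        (ofAdd ((MK hl0 g.right.right).mulVec (toAdd y.right)))]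
    simp only [dlAct_apply, toAdd_mul, toAdd_ofAdd]
    rw [map_add (sigmaH hl0 g.right.right), map_mul (sigmaH hl0 g.right.right)]
    erw [sigmaH_monU hl0 g.right.right (toAdd x.right)]
    ring
  · rw [act_right, SemidirectProduct.mul_right, SemidirectProduct.mul_right, act_right, act_right]
    rw [toAdd_mul, Matrix.mulVec_add, ofAdd_add]

lemma act_mul (g h : DG q d l i0 hl0) (x : DLGroup q d l) :
    act hl0 (g * h) x = act hl0 g (act hl0 h x) := by
  apply SemidirectProduct.ext
  · rw [act_left, act_left, act_left, act_right]
    simp only [SemidirectProduct.mul_left, SemidirectProduct.mul_right, toAdd_ofAdd]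
    apply congrArg ofAdd
    have hδ : ((g.left * (rhoH hl0) g.right h.left :
        derivSubgroup (dlAct q d l)) : Multiplicative (Fin (d-1) → ℤ) → Multiplicative (Rd q d l))
        (ofAdd ((MK hl0 (g.right.right * h.right.right)).mulVec (toAdd x.right)))
        = (g.left : Multiplicative (Fin (d-1) → ℤ) → Multiplicative (Rd q d l))
            (ofAdd ((MK hl0 (g.right.right * h.right.right)).mulVec (toAdd x.right)))
          * dact hl0 g.right.left g.right.right
            (h.left : Multiplicative (Fin (d-1) → ℤ) → Multiplicative (Rd q d l))
            (ofAdd ((MK hl0 (g.right.right * h.right.right)).mulVec (toAdd x.right))) := rfl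
    rw [hδ]
    unfold dact
    simp only [toAdd_mul, toAdd_ofAdd, MK_mul, Matrix.mulVec_mulVec]
    rw [show MK hl0 g.right.right⁻¹ * (MK hl0 g.right.right * MK hl0 h.right.right)
      = MK hl0 h.right.right by rw [← mul_assoc, ← MK_mul, inv_mul_cancel, MK_one, one_mul]]
    rw [Units.val_mul, psiH_coe]
    have hs : ∀ z : Rd q d l, sigmaH hl0 (g.right.right * h.right.right) z
        = sigmaH hl0 g.right.right (sigmaH hl0 h.right.right z) := by
      intro z; rw [map_mul (sigmaH hl0)]; rfl
    rw [hs, map_add (sigmaH hl0 g.right.right), map_mul (sigmaH hl0 g.right.right)]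
    rw [show (MK hl0 g.right.right * MK hl0 h.right.right) = MK hl0 (g.right.right * h.right.right)
      from (MK_mul hl0 _ _).symm]
    ring
  · rw [act_right, act_right, act_right]
    simp only [SemidirectProduct.mul_right, toAdd_ofAdd, MK_mul, Matrix.mulVec_mulVec]

noncomputable def Phi : DG q d l i0 hl0 →* MulAut (DLGroup q d l) where
  toFun g :=
    { toFun := act hl0 g
      invFun := act hl0 g⁻¹
      left_inv := fun x => by rw [← act_mul, inv_mul_cancel, act_one]
      right_inv := fun x => by rw [← act_mul, mul_inv_cancel, act_one]
      map_mul' := act_hom hl0 g }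
  map_one' := MulEquiv.ext fun x => act_one hl0 x
  map_mul' g h := MulEquiv.ext fun x => act_mul hl0 g h x
lemma Phi_ker (g : DG q d l i0 hl0) (hg : Phi hl0 g = 1) : g = 1 := by
  have hx : ∀ x, act hl0 g x = x := fun x =>
    congrArg (fun e : MulAut (DLGroup q d l) => e x) hg
  have hR : ∀ v : Fin (d-1) → ℤ, (MK hl0 g.right.right).mulVec v = v := by
    intro v
    have h2 := congrArg SemidirectProduct.right (hx (inr (ofAdd v)))
    rw [act_right] at h2
    simpa using congrArg toAdd h2
  have hMone : MK hl0 g.right.right = 1 := by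
    apply Matrix.ext; intro i j
    have h4 := congrFun (hR (Pi.single j 1)) i
    rw [Matrix.mulVec_single] at h4
    simpa [Matrix.one_apply, Pi.single_apply] using h4
  have hβ1 : g.right.right = 1 := Subtype.ext (Units.ext hMone)
  have hδ1 : g.left = 1 := by
    apply Subtype.ext; funext w
    have h5 := congrArg SemidirectProduct.left (hx (inr w))
    rw [act_left, hβ1, MK_one, Matrix.one_mulVec, map_one (sigmaH hl0)] at h5
    have h6 := congrArg toAdd h5
    simpa using h6
  have hu : g.right.left = 1 := by
    apply Units.ext
    have h7 := congrArg SemidirectProduct.left (hx (inl (ofAdd (1 : Rd q d l))))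
    rw [act_left, hβ1, MK_one, Matrix.one_mulVec, map_one (sigmaH hl0), hδ1] at h7
    have h8 := congrArg toAdd h7
    simpa using h8
  apply SemidirectProduct.ext
  · rw [hδ1]; rfl
  · apply SemidirectProduct.ext
    · rw [hu]; rfl
    · rw [hβ1]; rfl

lemma Phi_inj : Function.Injective (Phi (q := q) (d := d) (l := l) (i0 := i0) hl0) := by
  intro g g' hgg'
  have h := Phi_ker hl0 (g * g'⁻¹) (by rw [map_mul, map_inv, hgg', mul_inv_cancel])
  exact mul_inv_eq_one.mp h
section Surj

variable [NeZero q]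

lemma phi_inl_right (φ : MulAut (DLGroup q d l)) (n : Multiplicative (Rd q d l)) :
    (φ (inl n)).right = 1 := by
  have hn : n ^ q = 1 := by
    have h1 : ofAdd (toAdd n) ^ q = ofAdd (q • toAdd n) := (ofAdd_nsmul _ _).symm
    rw [ofAdd_toAdd] at h1
    rw [h1, q_smul]
    rfl
  have h2 : (φ (inl n)) ^ q = 1 := by rw [← map_pow, ← map_pow, hn, map_one, map_one]
  have h3 : (φ (inl n)).right ^ q = 1 := by
    have h := congrArg rightHom h2
    rwa [map_pow, map_one] at h
  have h4 : q • toAdd ((φ (inl n)).right) = 0 := by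
    have h := congrArg toAdd h3
    rw [toAdd_pow] at h
    simpa using h
  have hq0 : (q : ℤ) ≠ 0 := by exact_mod_cast NeZero.ne q
  have h5 : toAdd ((φ (inl n)).right) = 0 := by
    funext i
    have h := congrFun h4 i
    simp only [Pi.smul_apply, Pi.zero_apply, nsmul_eq_mul] at h
    exact (mul_eq_zero.mp h).resolve_left hq0
  calc (φ (inl n)).right = ofAdd (toAdd ((φ (inl n)).right)) := rfl
    _ = ofAdd 0 := by rw [h5]
    _ = 1 := rfl

noncomputable def eH (φ : MulAut (DLGroup q d l)) : Rd q d l →+ Rd q d l :=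
  AddMonoidHom.mk' (fun a => toAdd ((φ (inl (ofAdd a))).left)) (by
    intro a b
    show toAdd ((φ (inl (ofAdd (a + b)))).left) = _
    have h1 : (ofAdd (a + b)) = ofAdd a * ofAdd b := rfl
    rw [h1, map_mul, map_mul, SemidirectProduct.mul_left, phi_inl_right, map_one]
    show toAdd ((φ (inl (ofAdd a))).left * (φ (inl (ofAdd b))).left) = _
    rw [toAdd_mul])

lemma phi_inl (φ : MulAut (DLGroup q d l)) (a : Rd q d l) :
    φ (inl (ofAdd a)) = inl (ofAdd (eH φ a)) := by
  apply SemidirectProduct.ext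
  · rfl
  · rw [phi_inl_right]; rfl

lemma aut_apply_inv (φ : MulAut (DLGroup q d l)) (x : DLGroup q d l) : φ (φ⁻¹ x) = x := by
  have h : (φ * φ⁻¹) x = x := by rw [mul_inv_cancel]; rfl
  exact h

lemma aut_inv_apply (φ : MulAut (DLGroup q d l)) (x : DLGroup q d l) : φ⁻¹ (φ x) = x := by
  have h : (φ⁻¹ * φ) x = x := by rw [inv_mul_cancel]; rfl
  exact h

lemma eH_eH_inv (φ : MulAut (DLGroup q d l)) (b : Rd q d l) : eH φ (eH φ⁻¹ b) = b := by
  have h1 : φ (φ⁻¹ (inl (ofAdd b))) = inl (ofAdd b) := aut_apply_inv φ (inl (ofAdd b))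
  rw [show (φ⁻¹ (inl (ofAdd b)) : DLGroup q d l) = inl (ofAdd (eH φ⁻¹ b)) from phi_inl φ⁻¹ b,
    phi_inl φ] at h1
  have := congrArg (fun x : DLGroup q d l => toAdd x.left) h1
  simpa using this

noncomputable def BH (φ : MulAut (DLGroup q d l)) : (Fin (d-1) → ℤ) →+ (Fin (d-1) → ℤ) :=
  AddMonoidHom.mk' (fun v => toAdd ((φ (inr (ofAdd v))).right)) (by
    intro v w
    show toAdd ((φ (inr (ofAdd (v + w)))).right) = _
    have h1 : (ofAdd (v + w)) = ofAdd v * ofAdd w := rfl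
    rw [h1, map_mul, map_mul, SemidirectProduct.mul_right, toAdd_mul])

noncomputable def MatM (φ : MulAut (DLGroup q d l)) : Matrix (Fin (d-1)) (Fin (d-1)) ℤ :=
  LinearMap.toMatrix' (BH φ).toIntLinearMap

lemma MatM_mulVec (φ : MulAut (DLGroup q d l)) (v : Fin (d-1) → ℤ) :
    (MatM φ).mulVec v = BH φ v := by
  rw [← Matrix.toLin'_apply, MatM, Matrix.toLin'_toMatrix']
  rfl

lemma phi_right (φ : MulAut (DLGroup q d l)) (x : DLGroup q d l) :
    (φ x).right = ofAdd (BH φ (toAdd x.right)) := by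
  conv_lhs => rw [← inl_left_mul_inr_right x]
  rw [map_mul, SemidirectProduct.mul_right, phi_inl_right, one_mul]
  rfl

lemma BH_inv_cancel (φ : MulAut (DLGroup q d l)) (v : Fin (d-1) → ℤ) :
    BH φ⁻¹ (BH φ v) = v := by
  have h1 := phi_right φ⁻¹ (φ (inr (ofAdd v)))
  rw [aut_inv_apply] at h1
  rw [phi_right φ (inr (ofAdd v))] at h1
  have h2 : toAdd ((inr (ofAdd v) : DLGroup q d l).right) = v := rfl
  rw [h2] at h1
  have := congrArg toAdd h1
  simpa using this.symm

noncomputable def glM (φ : MulAut (DLGroup q d l)) :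
    Matrix.GeneralLinearGroup (Fin (d-1)) ℤ where
  val := MatM φ
  inv := MatM φ⁻¹
  val_inv := by
    rw [MatM, MatM, ← LinearMap.toMatrix'_comp, ← LinearMap.toMatrix'_id (R := ℤ) (n := Fin (d-1))]
    congr 1
    apply LinearMap.ext
    intro v
    have := BH_inv_cancel φ⁻¹ v
    rw [inv_inv] at this
    exact this
  inv_val := by
    rw [MatM, MatM, ← LinearMap.toMatrix'_comp, ← LinearMap.toMatrix'_id (R := ℤ) (n := Fin (d-1))]
    congr 1
    apply LinearMap.ext
    intro v
    exact BH_inv_cancel φ v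

lemma conj_inl (y : DLGroup q d l) (b : Multiplicative (Rd q d l)) :
    y * inl b * y⁻¹ = inl (dlAct q d l y.right b) := by
  apply SemidirectProduct.ext
  · simp only [SemidirectProduct.mul_left, SemidirectProduct.mul_right,
      SemidirectProduct.left_inl, SemidirectProduct.right_inl, SemidirectProduct.inv_left,
      SemidirectProduct.inv_right, mul_one]
    have h1 : (dlAct q d l y.right) ((dlAct q d l y.right⁻¹) y.left⁻¹) = y.left⁻¹ := by
      rw [← MulAut.mul_apply, ← map_mul, mul_inv_cancel, map_one]
      rfl
    rw [h1, mul_comm y.left ((dlAct q d l y.right) b), mul_assoc, mul_inv_cancel, mul_one]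
  · simp only [SemidirectProduct.mul_right, SemidirectProduct.right_inl,
      SemidirectProduct.inv_right, mul_one, mul_inv_cancel]

lemma e_mon (φ : MulAut (DLGroup q d l)) (v : Fin (d-1) → ℤ) (a : Rd q d l) :
    eH φ (↑(monU q d l v) * a) = ↑(monU q d l (BH φ v)) * eH φ a := by
  have h0 : (inl (dlAct q d l (ofAdd v) (ofAdd a)) : DLGroup q d l)
      = inr (ofAdd v) * inl (ofAdd a) * inr (ofAdd v)⁻¹ := SemidirectProduct.inl_aut _ _
  have h1 := congrArg φ h0
  rw [map_mul, map_mul, map_inv inr, map_inv φ, phi_inl φ a] at h1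
  rw [conj_inl (φ (inr (ofAdd v))) (ofAdd (eH φ a))] at h1
  rw [dlAct_apply, toAdd_ofAdd, toAdd_ofAdd] at h1
  rw [phi_inl φ, phi_right φ (inr (ofAdd v))] at h1
  have h3 : toAdd ((inr (ofAdd v) : DLGroup q d l).right) = v := rfl
  rw [h3] at h1
  have h4 := congrArg (fun x : DLGroup q d l => toAdd x.left) h1
  simp only [SemidirectProduct.left_inl, dlAct_apply, toAdd_ofAdd] at h4
  exact h4

end Surj
section Surj2

variable [NeZero q]

lemma kCond_MatM (φ : MulAut (DLGroup q d l)) : kCond q d l (MatM φ) := by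
  intro i j hij
  have key : ∀ (k : Fin (d-1)) (a : Rd q d l),
      eH φ (am q d l X * a)
        = (↑(monU q d l (BH φ (Pi.single k 1))) - cM q d l (l k)) * eH φ a := by
    intro k a
    have h1 : am q d l X * a = ↑(monU q d l (Pi.single k 1)) * a - cM q d l (l k) * a := by
      rw [monU_single, tU_coe]
      have h2 : am q d l (X + C (l k)) = am q d l X + cM q d l (l k) := by rw [map_add]; rfl
      rw [h2]; ring
    rw [h1, (eH φ).map_sub, e_mon φ (Pi.single k 1) a, addHom_cM_mul (eH φ) (l k) a, sub_mul]
  have h2 := (key i (eH φ⁻¹ 1)).symm.trans (key j (eH φ⁻¹ 1))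
  rw [eH_eH_inv φ 1, mul_one, mul_one] at h2
  have hcol : ∀ k : Fin (d-1), (fun r => MatM φ r k) = BH φ (Pi.single k 1) := by
    intro k
    rw [← MatM_mulVec]
    simp [Matrix.mulVec_single]
    rfl
  have h3 : algebraMap (Polynomial (ZMod q)) (Rd q d l) (C (l j - l i))
      = cM q d l (l j - l i) := rfl
  rw [h3, (cM q d l).map_sub, hcol i, hcol j]
  linear_combination h2

variable (i0)

lemma glM_mem (φ : MulAut (DLGroup q d l)) : glM φ ∈ Ksub q d l i0 hl0 :=
  ⟨kCond_MatM φ, kCond_MatM φ⁻¹⟩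

noncomputable def betaK (φ : MulAut (DLGroup q d l)) : Ksub q d l i0 hl0 :=
  ⟨glM φ, glM_mem i0 hl0 φ⟩

lemma MK_betaK (φ : MulAut (DLGroup q d l)) : MK hl0 (betaK i0 hl0 φ) = MatM φ := rfl

lemma MK_betaK_inv (φ : MulAut (DLGroup q d l)) : MK hl0 (betaK i0 hl0 φ)⁻¹ = MatM φ⁻¹ := rfl

lemma eH_eq (φ : MulAut (DLGroup q d l)) (a : Rd q d l) :
    eH φ a = sigmaH hl0 (betaK i0 hl0 φ) a * eH φ 1 := by
  set β := betaK i0 hl0 φ with hβdef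
  have hEadd : ∀ x y : Rd q d l, eH φ (sigmaH hl0 β⁻¹ (x + y))
      = eH φ (sigmaH hl0 β⁻¹ x) + eH φ (sigmaH hl0 β⁻¹ y) := by
    intro x y; rw [map_add, map_add]
  set E : Rd q d l →+ Rd q d l := AddMonoidHom.mk' (fun x => eH φ (sigmaH hl0 β⁻¹ x)) hEadd
    with hEdef
  have hEapp : ∀ x, E x = eH φ (sigmaH hl0 β⁻¹ x) := fun x => rfl
  have hEmon : ∀ (v : Fin (d-1) → ℤ) (c : Rd q d l),
      E (↑(monU q d l v) * c) = ↑(monU q d l v) * E c := by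
    intro v c
    rw [hEapp, hEapp, map_mul (sigmaH hl0 β⁻¹)]
    erw [sigmaH_monU hl0 β⁻¹ v]
    rw [e_mon]
    have hv : BH φ ((MK hl0 β⁻¹).mulVec v) = v := by
      rw [hβdef, MK_betaK_inv, MatM_mulVec]
      have h := BH_inv_cancel φ⁻¹ v
      rwa [inv_inv] at h
    rw [hv]
  have hEX : ∀ c, E (am q d l X * c) = am q d l X * E c := by
    intro c
    rw [amX hl0]
    exact hEmon (Pi.single i0 1) c
  have hEp : ∀ (p : Polynomial (ZMod q)) (c : Rd q d l),
      E (am q d l p * c) = am q d l p * E c := by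
    intro p
    induction p using Polynomial.induction_on with
    | C c => intro x; exact addHom_cM_mul E c x
    | add p r hp hr =>
      intro x
      rw [map_add, add_mul, map_add, hp, hr, add_mul]
    | monomial n c ih =>
      intro x
      have h1 : ∀ y : Rd q d l, am q d l (C c * X ^ (n+1)) * y
          = am q d l (C c * X ^ n) * (am q d l X * y) := by
        intro y
        rw [map_mul, map_mul, map_pow, map_pow, pow_succ]
        ring
      rw [h1, ih, hEX, h1]
  have hEs : ∀ x c : Rd q d l, E (x * c) = x * E c := by
    intro x c
    obtain ⟨⟨r, s⟩, hx⟩ := IsLocalization.surj (M := dlSub q d l) (S := Rd q d l) x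
    have hx' : x * am q d l ↑s = am q d l r := hx
    have hu : IsUnit (am q d l ↑s) := IsLocalization.map_units (Rd q d l) s
    have h1 : am q d l ↑s * E (x * c) = am q d l ↑s * (x * E c) := by
      rw [← hEp ↑s (x * c)]
      have h2 : am q d l ↑s * (x * c) = am q d l r * c := by
        rw [← hx']; ring
      rw [h2, hEp r c, ← hx']
      ring
    exact hu.mul_left_cancel h1
  have h3 : E (sigmaH hl0 β a) = eH φ a := by
    rw [hEapp, sigmaH_inv_apply]
  have h4 : E (sigmaH hl0 β a) = sigmaH hl0 β a * E 1 := by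
    conv_lhs => rw [← mul_one (sigmaH hl0 β a)]
    exact hEs _ _
  have h5 : E 1 = eH φ 1 := by rw [hEapp, map_one]
  rw [← h3, h4, h5]

include i0 hl0 in
lemma eH_one_isUnit (φ : MulAut (DLGroup q d l)) : IsUnit (eH φ 1) := by
  have h1 := eH_eq i0 hl0 φ (eH φ⁻¹ 1)
  rw [eH_eH_inv φ 1] at h1
  exact IsUnit.of_mul_eq_one _ (by rw [mul_comm]; exact h1.symm)

end Surj2
section Surj3

variable [NeZero q] (i0)

noncomputable def dFun (φ : MulAut (DLGroup q d l)) :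
    Multiplicative (Fin (d-1) → ℤ) → Multiplicative (Rd q d l) :=
  fun w => (φ (inr w)).left

lemma dFun_mul (φ : MulAut (DLGroup q d l)) (w₁ w₂ : Multiplicative (Fin (d-1) → ℤ)) :
    dFun φ (w₁ * w₂)
      = dFun φ w₁ * dlAct q d l (ofAdd (BH φ (toAdd w₁))) (dFun φ w₂) := by
  unfold dFun
  rw [map_mul inr w₁ w₂, map_mul φ, SemidirectProduct.mul_left]
  have h1 : (φ (inr w₁)).right = ofAdd (BH φ (toAdd w₁)) := by
    rw [phi_right φ (inr w₁)]
    rfl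
  rw [h1]

noncomputable def delFun (φ : MulAut (DLGroup q d l)) :
    Multiplicative (Fin (d-1) → ℤ) → Multiplicative (Rd q d l) :=
  fun w => dFun φ (ofAdd ((MatM φ⁻¹).mulVec (toAdd w)))

lemma BH_cancel' (φ : MulAut (DLGroup q d l)) (v : Fin (d-1) → ℤ) :
    BH φ ((MatM φ⁻¹).mulVec v) = v := by
  rw [MatM_mulVec]
  have h := BH_inv_cancel φ⁻¹ v
  rwa [inv_inv] at h

lemma delMem (φ : MulAut (DLGroup q d l)) : delFun φ ∈ derivSubgroup (dlAct q d l) := by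
  intro w₁ w₂
  show delFun φ (w₁ * w₂) = delFun φ w₁ * dlAct q d l w₁ (delFun φ w₂)
  unfold delFun
  rw [show toAdd (w₁ * w₂) = toAdd w₁ + toAdd w₂ from rfl, Matrix.mulVec_add, ofAdd_add,
    dFun_mul, toAdd_ofAdd, BH_cancel', ofAdd_toAdd]

include i0 hl0 in
lemma Phi_surj : Function.Surjective (Phi (i0 := i0) hl0) := by
  intro φ
  refine ⟨⟨⟨delFun φ, delMem φ⟩, ⟨(eH_one_isUnit i0 hl0 φ).unit, betaK i0 hl0 φ⟩⟩, ?_⟩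
  set g : DG q d l i0 hl0 :=
    ⟨⟨delFun φ, delMem φ⟩, ⟨(eH_one_isUnit i0 hl0 φ).unit, betaK i0 hl0 φ⟩⟩ with hgdef
  have hgl : g.left = (⟨delFun φ, delMem φ⟩ : derivSubgroup (dlAct q d l)) := rfl
  have hinl : ∀ a : Rd q d l, act hl0 g (inl (ofAdd a)) = φ (inl (ofAdd a)) := by
    intro a
    apply SemidirectProduct.ext
    · rw [act_left]
      have h1 : toAdd ((inl (ofAdd a) : DLGroup q d l).left) = a := rfl
      have h2 : toAdd ((inl (ofAdd a) : DLGroup q d l).right) = 0 := rfl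
      rw [h1, h2, Matrix.mulVec_zero]
      have h3 : ((g.left : Multiplicative (Fin (d-1) → ℤ) → Multiplicative (Rd q d l))
          (ofAdd (0 : Fin (d-1) → ℤ))) = delFun φ (ofAdd 0) := rfl
      rw [h3]
      have h4 : delFun φ (ofAdd 0) = (1 : Multiplicative (Rd q d l)) := by
        unfold delFun dFun
        rw [toAdd_ofAdd, Matrix.mulVec_zero]
        have h5 : (inr (ofAdd (0 : Fin (d-1) → ℤ)) : DLGroup q d l) = 1 := rfl
        rw [h5, map_one]
        rfl
      rw [h4]
      have h6 : toAdd (1 : Multiplicative (Rd q d l)) = 0 := rfl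
      rw [h6, add_zero, phi_inl φ a]
      have h7 : ((inl (ofAdd (eH φ a)) : DLGroup q d l)).left = ofAdd (eH φ a) := rfl
      rw [h7, eH_eq i0 hl0 φ a]
      have h8 : (g.right.left : Rd q d l) = eH φ 1 := IsUnit.unit_spec _
      have h9 : g.right.right = betaK i0 hl0 φ := rfl
      rw [h8, h9, mul_comm]
    · rw [act_right]
      have h2 : toAdd ((inl (ofAdd a) : DLGroup q d l).right) = 0 := rfl
      rw [h2, Matrix.mulVec_zero, phi_inl_right]
      rfl
  have hinr : ∀ w : Multiplicative (Fin (d-1) → ℤ),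
      act hl0 g (inr w) = φ (inr w) := by
    intro w
    apply SemidirectProduct.ext
    · rw [act_left]
      have h1 : toAdd ((inr w : DLGroup q d l).left) = 0 := rfl
      have h2 : toAdd ((inr w : DLGroup q d l).right) = toAdd w := rfl
      rw [h1, h2, map_zero, mul_zero, zero_add]
      have h9 : g.right.right = betaK i0 hl0 φ := rfl
      have h3 : (MK hl0 g.right.right) = MatM φ := rfl
      rw [h3]
      have h4 : ((g.left : Multiplicative (Fin (d-1) → ℤ) → Multiplicative (Rd q d l))
          (ofAdd ((MatM φ).mulVec (toAdd w)))) = delFun φ (ofAdd ((MatM φ).mulVec (toAdd w))) := rfl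
      rw [h4]
      unfold delFun
      rw [toAdd_ofAdd, Matrix.mulVec_mulVec]
      have h5 : (MatM φ⁻¹ * MatM φ).mulVec (toAdd w) = toAdd w := by
        rw [← Matrix.mulVec_mulVec, MatM_mulVec, MatM_mulVec]
        exact BH_inv_cancel φ (toAdd w)
      rw [h5, ofAdd_toAdd]
      unfold dFun
      rw [ofAdd_toAdd]
    · rw [act_right]
      have h2 : toAdd ((inr w : DLGroup q d l).right) = toAdd w := rfl
      rw [h2]
      have h3 : (MK hl0 g.right.right) = MatM φ := rfl
      rw [h3, MatM_mulVec, phi_right φ (inr w)]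
      rfl
  apply MulEquiv.ext
  intro x
  show act hl0 g x = φ x
  calc act hl0 g x = act hl0 g (inl x.left * inr x.right) := by
        rw [inl_left_mul_inr_right]
    _ = act hl0 g (inl x.left) * act hl0 g (inr x.right) := act_hom hl0 g _ _
    _ = φ (inl x.left) * φ (inr x.right) := by
        rw [← ofAdd_toAdd x.left, hinl (toAdd x.left), hinr]
    _ = φ x := by rw [← map_mul, inl_left_mul_inr_right]

end Surj3
end DLP

/-- Theorem 3.2: `Aut(Γ_d(q)) ≅ Der(ℤ^(d-1), R_d(ℤ_q)) ⋊ (U(R_d(ℤ_q)) ⋊ 𝒦)`, where `𝒦`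
is the group of integer matrices `β ∈ GL_{d-1}(ℤ)` satisfying
`(l_j - l_i) + ∏_k (t+l_k)^(b_{k,i}) - ∏_k (t+l_k)^(b_{k,j}) = 0` (for `β` and `β⁻¹`);
each `β ∈ 𝒦` induces a ring automorphism `σ_β` of `R_d(ℤ_q)` with
`σ_β(∏ (t+l_i)^(v i)) = ∏ (t+l_i)^((βv) i)`, preserving the unit group, `β` acts on
`U(R_d(ℤ_q))` by `σ_β`, and `(R₀, β)` acts on a derivation `δ` by
`v ↦ R₀ · σ_β(δ(β⁻¹ v))`. -/
theorem statement4 (q d : ℕ) (hq : 2 ≤ q) (hd : 2 ≤ d) (l : Fin (d-1) → ZMod q)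
    (hl0 : l ⟨0, by omega⟩ = 0)
    (hl : ∀ i j : Fin (d-1), i ≠ j → IsUnit (l i - l j)) :
    ∃ K : Subgroup (Matrix.GeneralLinearGroup (Fin (d-1)) ℤ),
      (K : Set (Matrix.GeneralLinearGroup (Fin (d-1)) ℤ)) = kSet q d l ∧
      ∃ σ : K →* RingAut (Rd q d l),
        (∀ (β : K) (v : Fin (d-1) → ℤ),
          σ β (monU q d l v : Rd q d l)
            = (monU q d l
                (((β : Matrix.GeneralLinearGroup (Fin (d-1)) ℤ) :
                    Matrix (Fin (d-1)) (Fin (d-1)) ℤ).mulVec v) : Rd q d l)) ∧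
        ∃ ψ : K →* MulAut (Rd q d l)ˣ,
          (∀ (β : K) (u : (Rd q d l)ˣ), ((ψ β u : (Rd q d l)ˣ) : Rd q d l) = σ β ↑u) ∧
          ∃ ρ : ((Rd q d l)ˣ ⋊[ψ] K) →* MulAut (derivSubgroup (dlAct q d l)),
            (∀ (R₀ : (Rd q d l)ˣ) (β : K) (δ : derivSubgroup (dlAct q d l))
                (v : Fin (d-1) → ℤ),
              ((ρ ⟨R₀, β⟩ δ :
                  Multiplicative (Fin (d-1) → ℤ) → Multiplicative (Rd q d l))
                  (Multiplicative.ofAdd v))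
                = Multiplicative.ofAdd ((R₀ : Rd q d l) *
                    σ β (Multiplicative.toAdd
                      ((δ : Multiplicative (Fin (d-1) → ℤ) → Multiplicative (Rd q d l))
                        (Multiplicative.ofAdd
                          ((((β⁻¹ : K) : Matrix.GeneralLinearGroup (Fin (d-1)) ℤ) : Matrix (Fin (d-1)) (Fin (d-1)) ℤ).mulVec v))))) ) ∧
            Nonempty
              (MulAut (DLGroup q d l) ≃*
                (derivSubgroup (dlAct q d l)) ⋊[ρ] ((Rd q d l)ˣ ⋊[ψ] K)) := by
  have hd1 : 0 < d - 1 := by omega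
  haveI : NeZero q := ⟨by omega⟩
  have hl0' : l ⟨0, hd1⟩ = 0 := hl0
  refine ⟨DLP.Ksub q d l ⟨0, hd1⟩ hl0', rfl, DLP.sigmaH hl0', ?_, DLP.psiH hl0', ?_,
    DLP.rhoH hl0', ?_, ?_⟩
  · intro β v
    exact DLP.sigmaH_monU hl0' β v
  · intro β u
    rfl
  · intro R₀ β δ v
    rfl
  · exact ⟨(MulEquiv.ofBijective (DLP.Phi hl0')
      ⟨DLP.Phi_inj hl0', DLP.Phi_surj ⟨0, hd1⟩ hl0'⟩).symm⟩
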